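/- Let g be a semisimple (or more generally, a Lie algebra with an invariant symmetric bilinear form) Lie algebra with orthonormal basis e_α, and consider the universal enveloping algebra U(g ⊕ ... ⊕ g) of n copies of g, with e_α^j denoting the basis element e_α in the j-th copy. Then the mixed Casimirs Δ_{ij} = Σ_α e_α^i e_α^j satisfy the Kohno relations: [Δ_{ij}, Δ_{kl}] = 0 if i,j,k,l are pairwise distinct, and [Δ_{ij}, Δ_{ik} + Δ_{jk}] = 0 for distinct i,j,k. -/

import Mathlib

open scoped BigOperators DirectSum

namespace Stmt1

variable {K : Type*} [Field K] [CharZero K]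
variable {L : Type*} [LieRing L] [LieAlgebra K L]

attribute [local instance 100] LieRing.ofAssociativeRing

/-- `n` copies of the Lie algebra `L`, as a direct sum. -/
abbrev nCopies (L : Type*) [LieRing L] [LieAlgebra K L] (n : ℕ) : Type _ :=
  ⨁ _j : Fin n, L

/-- The image `e_α^j` in the universal enveloping algebra of `n` copies of `L` of the basis
element `e α` placed in the `j`-th copy. -/
noncomputable def gen (n : ℕ) {m : ℕ} (e : Module.Basis (Fin m) K L) (j : Fin n) (α : Fin m) :
    UniversalEnvelopingAlgebra K (nCopies (K := K) L n) :=
  UniversalEnvelopingAlgebra.ι K (DirectSum.lieAlgebraOf K (Fin n) (fun _ => L) j (e α))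

/-- The mixed Casimir `Δ_{ij} = Σ_α e_α^i e_α^j`. -/
noncomputable def Δ (n : ℕ) {m : ℕ} (e : Module.Basis (Fin m) K L) (i j : Fin n) :
    UniversalEnvelopingAlgebra K (nCopies (K := K) L n) :=
  ∑ α : Fin m, gen n e i α * gen n e j α

/-- Auxiliary: the image in `U(L^{⊕n})` of an arbitrary element of `L` placed in copy `p`. -/
noncomputable def ig (n : ℕ) (p : Fin n) (x : L) :
    UniversalEnvelopingAlgebra K (nCopies (K := K) L n) :=
  UniversalEnvelopingAlgebra.ι K (DirectSum.lieAlgebraOf K (Fin n) (fun _ => L) p x)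

omit [CharZero K] in
theorem ig_comm (n : ℕ) {i j : Fin n} (h : i ≠ j) (x y : L) :
    Commute (ig (K := K) n i x) (ig n j y) := by
  have h1 : ⁅(DirectSum.lieAlgebraOf K (Fin n) (fun _ => L) i x : nCopies (K := K) L n),
      DirectSum.lieAlgebraOf K (Fin n) (fun _ => L) j y⁆ = 0 := by
    simpa using DirectSum.lie_of_of_ne (fun _ : Fin n => L) h x y
  have h2 := (UniversalEnvelopingAlgebra.ι K (L := nCopies (K := K) L n)).map_lie
      (x := DirectSum.lieAlgebraOf K (Fin n) (fun _ => L) i x)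
      (y := DirectSum.lieAlgebraOf K (Fin n) (fun _ => L) j y)
  rw [h1, map_zero, Ring.lie_def] at h2
  exact sub_eq_zero.mp h2.symm

omit [CharZero K] in
theorem ig_sub (n : ℕ) (p : Fin n) (x y : L) :
    ig (K := K) n p x * ig n p y - ig n p y * ig n p x = ig n p ⁅x, y⁆ := by
  have h2 := (UniversalEnvelopingAlgebra.ι K (L := nCopies (K := K) L n)).map_lie
      (x := DirectSum.lieAlgebraOf K (Fin n) (fun _ => L) p x)
      (y := DirectSum.lieAlgebraOf K (Fin n) (fun _ => L) p y)
  rw [Ring.lie_def] at h2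
  rw [ig, ig, ig, ← h2, ← LieHom.map_lie]

omit [CharZero K] in
theorem ig_linear (n : ℕ) (p : Fin n) (m : ℕ) (c : Fin m → K) (v : Fin m → L) :
    ig (K := K) n p (∑ γ : Fin m, c γ • v γ) = ∑ γ : Fin m, c γ • ig n p (v γ) := by
  let f : L →ₗ[K] UniversalEnvelopingAlgebra K (nCopies (K := K) L n) :=
    (UniversalEnvelopingAlgebra.ι K).toLinearMap.comp
      (DirectSum.lieAlgebraOf K (Fin n) (fun _ => L) p).toLinearMap
  have hf : ∀ x, ig (K := K) n p x = f x := fun _ => rfl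
  rw [hf, map_sum]
  exact Finset.sum_congr rfl fun γ _ => by rw [map_smul, hf]

omit [CharZero K] in
theorem gen_eq (n : ℕ) {m : ℕ} (e : Module.Basis (Fin m) K L) (p : Fin n) (α : Fin m) :
    gen n e p α = ig (K := K) n p (e α) := rfl

omit [CharZero K] in
theorem expand (m : ℕ) (e : Module.Basis (Fin m) K L) (B : LinearMap.BilinForm K L)
    (horth : ∀ α β : Fin m, B (e α) (e β) = if α = β then 1 else 0) (x : L) :
    x = ∑ γ : Fin m, B x (e γ) • e γ := by
  conv_lhs => rw [← e.sum_repr x]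
  refine Finset.sum_congr rfl fun γ _ => ?_
  congr 1
  conv_rhs => rw [← e.sum_repr x]
  simp only [map_sum, map_smul, LinearMap.sum_apply, LinearMap.smul_apply, horth, smul_eq_mul,
    mul_ite, mul_one, mul_zero, Finset.sum_ite_eq', Finset.mem_univ, if_true]

theorem mixed_casimirs_satisfy_kohno_relations
    (n m : ℕ) (e : Module.Basis (Fin m) K L) (B : LinearMap.BilinForm K L)
    (hsymm : ∀ x y : L, B x y = B y x)
    (hinv : ∀ x y z : L, B ⁅x, y⁆ z = B x ⁅y, z⁆)
    (horth : ∀ α β : Fin m, B (e α) (e β) = if α = β then 1 else 0)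
    (i j k l : Fin n)
    (hij : i ≠ j) (hik : i ≠ k) (hil : i ≠ l) (hjk : j ≠ k) (hjl : j ≠ l) (hkl : k ≠ l) :
    Δ n e i j * Δ n e k l - Δ n e k l * Δ n e i j = 0 ∧
    Δ n e i j * (Δ n e i k + Δ n e j k) - (Δ n e i k + Δ n e j k) * Δ n e i j = 0 := by
  classical
  set c : Fin m → Fin m → Fin m → K := fun α β γ => B ⁅e α, e β⁆ (e γ) with hc
  have hcyc : ∀ x y z : L, B ⁅x, y⁆ z = B ⁅y, z⁆ x := fun x y z =>
    (hinv x y z).trans (hsymm x ⁅y, z⁆)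
  have hskew : ∀ x y z : L, B ⁅x, y⁆ z = - B ⁅y, x⁆ z := by
    intro x y z
    rw [← lie_skew y x, map_neg, LinearMap.neg_apply, neg_neg]
  have hanti : ∀ α β γ : Fin m, c γ β α = - c α β γ := by
    intro α β γ
    rw [hc]
    dsimp only
    rw [hcyc (e γ) (e β) (e α), hskew (e β) (e α) (e γ)]
  -- bracket expansion in U
  have key : ∀ (p : Fin n) (α β : Fin m),
      ig (K := K) n p ⁅e α, e β⁆ = ∑ γ : Fin m, c α β γ • ig n p (e γ) := by
    intro p α β
    conv_lhs => rw [expand m e B horth ⁅e α, e β⁆]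
    rw [ig_linear]
  -- abbreviations
  have comm : ∀ {p q : Fin n}, p ≠ q → ∀ x y : L,
      ig (K := K) n p x * ig n q y = ig n q y * ig n p x := fun h x y => (ig_comm n h x y).eq
  -- Part 1
  have part1 : Δ n e i j * Δ n e k l - Δ n e k l * Δ n e i j = 0 := by
    have hcom : Commute (Δ n e i j) (Δ n e k l) := by
      simp only [Δ, gen_eq]
      refine Commute.sum_left _ _ _ fun α _ => Commute.sum_right _ _ _ fun β _ => ?_
      exact ((ig_comm n hik _ _).mul_left (ig_comm n hjk _ _)).mul_right
        ((ig_comm n hil _ _).mul_left (ig_comm n hjl _ _))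
    rw [hcom.eq, sub_self]
  refine ⟨part1, ?_⟩
  -- central lemma: Δ_ij commutes with the "diagonal" elements e_β^i + e_β^j
  have lemC : ∀ β : Fin m,
      Δ n e i j * (ig (K := K) n i (e β) + ig n j (e β))
        - (ig n i (e β) + ig n j (e β)) * Δ n e i j = 0 := by
    intro β
    simp only [Δ, gen_eq]
    rw [Finset.sum_mul, Finset.mul_sum, ← Finset.sum_sub_distrib]
    have step : ∀ α : Fin m,
        ig (K := K) n i (e α) * ig n j (e α) * (ig n i (e β) + ig n j (e β))
          - (ig n i (e β) + ig n j (e β)) * (ig n i (e α) * ig n j (e α))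
        = (∑ γ : Fin m, c α β γ • (ig n i (e γ) * ig n j (e α)))
          + ∑ γ : Fin m, c α β γ • (ig n i (e α) * ig n j (e γ)) := by
      intro α
      have c1 : ig (K := K) n j (e α) * ig n i (e β) = ig n i (e β) * ig n j (e α) :=
        comm hij.symm _ _
      have c2 : ig (K := K) n j (e β) * ig n i (e α) = ig n i (e α) * ig n j (e β) :=
        comm hij.symm _ _
      have h1 : ig (K := K) n i (e α) * ig n j (e α) * (ig n i (e β) + ig n j (e β))
          - (ig n i (e β) + ig n j (e β)) * (ig n i (e α) * ig n j (e α))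
          = (ig n i (e α) * ig n i (e β) - ig n i (e β) * ig n i (e α)) * ig n j (e α)
            + ig n i (e α) * (ig n j (e α) * ig n j (e β) - ig n j (e β) * ig n j (e α)) := by
        have e1 : ig (K := K) n i (e α) * ig n j (e α) * (ig n i (e β) + ig n j (e β))
            = ig n i (e α) * ig n i (e β) * ig n j (e α)
              + ig n i (e α) * (ig n j (e α) * ig n j (e β)) := by
          rw [mul_add]
          congr 1
          · rw [mul_assoc, c1, ← mul_assoc]
          · rw [mul_assoc]
        have e2 : (ig (K := K) n i (e β) + ig n j (e β)) * (ig n i (e α) * ig n j (e α))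
            = ig n i (e β) * ig n i (e α) * ig n j (e α)
              + ig n i (e α) * (ig n j (e β) * ig n j (e α)) := by
          rw [add_mul]
          congr 1
          · rw [← mul_assoc]
          · rw [← mul_assoc, c2, mul_assoc]
        rw [e1, e2, sub_mul, mul_sub]
        abel
      rw [h1, ig_sub, ig_sub, key, key, Finset.sum_mul, Finset.mul_sum]
      congr 1
      · exact Finset.sum_congr rfl fun γ _ => smul_mul_assoc _ _ _
      · exact Finset.sum_congr rfl fun γ _ => mul_smul_comm _ _ _
    calc (∑ α : Fin m, (ig (K := K) n i (e α) * ig n j (e α) * (ig n i (e β) + ig n j (e β))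
          - (ig n i (e β) + ig n j (e β)) * (ig n i (e α) * ig n j (e α))))
        = ∑ α : Fin m, ((∑ γ : Fin m, c α β γ • (ig n i (e γ) * ig n j (e α)))
            + ∑ γ : Fin m, c α β γ • (ig n i (e α) * ig n j (e γ))) :=
          Finset.sum_congr rfl fun α _ => step α
      _ = (∑ α : Fin m, ∑ γ : Fin m, c α β γ • (ig n i (e γ) * ig n j (e α)))
            + ∑ α : Fin m, ∑ γ : Fin m, c α β γ • (ig n i (e α) * ig n j (e γ)) :=
          Finset.sum_add_distrib
      _ = (∑ α : Fin m, ∑ γ : Fin m, c α β γ • (ig n i (e γ) * ig n j (e α)))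
            + ∑ α : Fin m, ∑ γ : Fin m, c γ β α • (ig n i (e γ) * ig n j (e α)) := by
          rw [Finset.sum_comm (f := fun α γ => c α β γ • (ig (K := K) n i (e α) * ig n j (e γ)))]
      _ = ∑ α : Fin m, ∑ γ : Fin m, (c α β γ • (ig n i (e γ) * ig n j (e α))
            + c γ β α • (ig n i (e γ) * ig n j (e α))) := by
          rw [← Finset.sum_add_distrib]
          exact Finset.sum_congr rfl fun α _ => (Finset.sum_add_distrib).symm
      _ = 0 := by
          refine Finset.sum_eq_zero fun α _ => Finset.sum_eq_zero fun γ _ => ?_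
          rw [hanti α β γ, ← add_smul, add_neg_cancel, zero_smul]
  -- assemble part 2
  have hXsum : Δ n e i k + Δ n e j k
      = ∑ β : Fin m, (ig (K := K) n i (e β) + ig n j (e β)) * ig n k (e β) := by
    simp only [Δ, gen_eq, ← Finset.sum_add_distrib]
    exact Finset.sum_congr rfl fun β _ => (add_mul _ _ _).symm
  have hkcomm : ∀ β : Fin m, ig (K := K) n k (e β) * Δ n e i j = Δ n e i j * ig n k (e β) := by
    intro β
    simp only [Δ, gen_eq]
    rw [Finset.mul_sum, Finset.sum_mul]
    refine Finset.sum_congr rfl fun α _ => ?_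
    rw [← mul_assoc, comm hik.symm, mul_assoc, comm hjk.symm, ← mul_assoc]
  rw [hXsum, Finset.mul_sum, Finset.sum_mul, ← Finset.sum_sub_distrib]
  refine Finset.sum_eq_zero fun β _ => ?_
  rw [← mul_assoc, mul_assoc _ (ig (K := K) n k (e β)) _, hkcomm β, ← mul_assoc, ← sub_mul,
    lemC β, zero_mul]

end Stmt1
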